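/- Let J ≥ 2 be an integer and λ ≥ 0 a real number. Let K be a J×J real positive semidefinite matrix with strictly positive diagonal entries, let P₁ ≥ K₁₁ be a real number, and let K′ = K + (P₁ − K₁₁)·e₁e₁ᵀ (i.e., K′ agrees with K except that its (1,1) entry is P₁). Then K′ is positive semidefinite and h(λ, K′) ≤ h(λ, K). -/

import Mathlib

open Finset

open scoped Matrix

lemma psd_cs {n : ℕ} {M : Matrix (Fin n) (Fin n) ℝ} (hM : M.PosSemidef)
    (x y : Fin n → ℝ) :
    (x ⬝ᵥ M *ᵥ y) ^ 2 ≤ (x ⬝ᵥ M *ᵥ x) * (y ⬝ᵥ M *ᵥ y) := by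
  have hsym : ∀ a b, M a b = M b a := fun a b => by
    have h := congrFun (congrFun hM.1 a) b
    simpa [Matrix.conjTranspose_apply] using h.symm
  have hswap : y ⬝ᵥ M *ᵥ x = x ⬝ᵥ M *ᵥ y := by
    simp only [dotProduct, Matrix.mulVec, Finset.mul_sum]
    rw [Finset.sum_comm]
    refine Finset.sum_congr rfl fun a _ => Finset.sum_congr rfl fun b _ => ?_
    rw [hsym b a]; ring
  have key : ∀ t : ℝ, 0 ≤ (y ⬝ᵥ M *ᵥ y) * (t * t) + (2 * (x ⬝ᵥ M *ᵥ y)) * t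
      + (x ⬝ᵥ M *ᵥ x) := by
    intro t
    have h0 := hM.dotProduct_mulVec_nonneg (x + t • y)
    simp only [star_trivial, Matrix.mulVec_add, Matrix.mulVec_smul, dotProduct_add,
      add_dotProduct, smul_dotProduct, dotProduct_smul, smul_eq_mul] at h0
    rw [hswap] at h0
    nlinarith [h0]
  have hd := discrim_le_zero key
  rw [discrim] at hd
  nlinarith [hd]

lemma row_sq_le {n : ℕ} {M : Matrix (Fin n) (Fin n) ℝ} (hM : M.PosSemidef) (j : Fin n) :
    (∑ k, M j k) ^ 2 ≤ M j j * (∑ l, ∑ k, M l k) := by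
  have h := psd_cs hM (Pi.single j 1) (fun _ => 1)
  simpa [dotProduct, Matrix.mulVec, Pi.single_apply, ite_mul, mul_ite,
    Finset.sum_ite_eq, Finset.sum_ite_eq'] using h

lemma sum_nonneg_of_psd {n : ℕ} {M : Matrix (Fin n) (Fin n) ℝ} (hM : M.PosSemidef) :
    0 ≤ ∑ l, ∑ k, M l k := by
  have h := hM.dotProduct_mulVec_nonneg (fun _ => 1)
  simpa [dotProduct, Matrix.mulVec] using h

lemma std_psd {n : ℕ} (i : Fin n) {c : ℝ} (hc : 0 ≤ c) :
    (Matrix.single i i c).PosSemidef := by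
  refine Matrix.posSemidef_iff_dotProduct_mulVec.mpr ⟨?_, ?_⟩
  · ext a b
    simp only [Matrix.conjTranspose_apply, Matrix.single, Matrix.of_apply, star_trivial]
    by_cases h1 : i = a <;> by_cases h2 : i = b <;> simp [h1, h2]
  · intro x
    have h : (star x) ⬝ᵥ (Matrix.single i i c) *ᵥ x = c * (x i * x i) := by
      simp [Matrix.single, Matrix.mulVec, dotProduct, ite_and, ite_mul, zero_mul,
        mul_ite, mul_zero, Finset.sum_ite_eq]
      ring
    rw [h]
    nlinarith [sq_nonneg (x i)]

/-- The function `h(λ, K)` from the dependence-balance bound: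
`h(λ, K) = ((λ−1)/2)·log(1 + Σ_{j,k} K_{jk})
  − (λ/(2(J−1)))·Σ_j log(1 + Σ_{ℓ,k} K_{ℓk} − (Σ_k K_{jk})²/K_{jj})`. -/
noncomputable def hFun (J : ℕ) (lam : ℝ) (K : Matrix (Fin J) (Fin J) ℝ) : ℝ :=
  ((lam - 1) / 2) * Real.log (1 + ∑ l : Fin J, ∑ k : Fin J, K l k)
    - (lam / (2 * ((J : ℝ) - 1))) *
      ∑ j : Fin J, Real.log (1 + (∑ l : Fin J, ∑ k : Fin J, K l k)
        - (∑ k : Fin J, K j k) ^ 2 / K j j)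

theorem aux_main (J : ℕ) (hJ : 2 ≤ J) (lam : ℝ) (hlam : 0 ≤ lam)
    (K : Matrix (Fin J) (Fin J) ℝ) (hpsd : K.PosSemidef)
    (hdiag : ∀ j : Fin J, 0 < K j j) (i : Fin J) (c : ℝ) (hc : 0 ≤ c) :
    (K + Matrix.single i i c).PosSemidef ∧
      hFun J lam (K + Matrix.single i i c) ≤ hFun J lam K := by
  set K' := K + Matrix.single i i c with hK'
  have hpsd' : K'.PosSemidef := hpsd.add (std_psd i hc)
  refine ⟨hpsd', ?_⟩
  -- basic quantities
  set S := ∑ l : Fin J, ∑ k : Fin J, K l k with hS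
  have hSnn : 0 ≤ S := sum_nonneg_of_psd hpsd
  -- entries of K'
  have hentry : ∀ j k, K' j k = K j k + (if i = j ∧ i = k then c else 0) := by
    intro j k; simp [hK', Matrix.add_apply, Matrix.single]
  have hrow : ∀ j, (∑ k, K' j k) = (∑ k, K j k) + (if i = j then c else 0) := by
    intro j
    simp only [hentry, Finset.sum_add_distrib]
    congr 1
    by_cases h : i = j <;> simp [h, Finset.sum_ite_eq]
  have hdiag' : ∀ j, K' j j = K j j + (if i = j then c else 0) := by
    intro j; rw [hentry]; by_cases h : i = j <;> simp [h]
  have hdiagpos' : ∀ j, 0 < K' j j := by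
    intro j; rw [hdiag' j]; have := hdiag j; split <;> linarith
  have hsum' : (∑ l : Fin J, ∑ k : Fin J, K' l k) = S + c := by
    simp only [hrow, Finset.sum_add_distrib, Finset.sum_ite_eq, Finset.mem_univ, if_true, hS]
  have hS'nn : 0 ≤ S + c := by linarith
  -- Cauchy-Schwarz bounds
  have hA : ∀ j, 1 ≤ 1 + S - (∑ k, K j k) ^ 2 / K j j := by
    intro j
    have h := row_sq_le hpsd j
    have hd := hdiag j
    have : (∑ k, K j k) ^ 2 / K j j ≤ S := by
      rw [div_le_iff₀ hd]; rw [hS]; nlinarith [h]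
    linarith
  have hA' : ∀ j, 1 ≤ 1 + (S + c) - (∑ k, K' j k) ^ 2 / K' j j := by
    intro j
    have h := row_sq_le hpsd' j
    have hd := hdiagpos' j
    have : (∑ k, K' j k) ^ 2 / K' j j ≤ S + c := by
      rw [div_le_iff₀ hd, ← hsum']; nlinarith [h]
    linarith
  -- logs
  set L := Real.log (1 + (S + c)) - Real.log (1 + S) with hL
  have hLnn : 0 ≤ L := by
    have := Real.log_le_log (by linarith : (0:ℝ) < 1 + S) (by linarith : 1 + S ≤ 1 + (S + c))
    simp [hL]; linarith
  -- pointwise log inequality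
  have hkey : ∀ j, Real.log (1 + S - (∑ k, K j k) ^ 2 / K j j) + (if i = j then 0 else L)
      ≤ Real.log (1 + (S + c) - (∑ k, K' j k) ^ 2 / K' j j) := by
    intro j
    by_cases hij : i = j
    · subst hij
      simp only [if_true]
      rw [add_zero]
      apply Real.log_le_log (by have := hA i; linarith)
      rw [hrow i, hdiag' i]
      simp only [if_true]
      have hd := hdiag i
      have h1 : ((∑ k, K i k) + c) ^ 2 / (K i i + c) ≤ c + (∑ k, K i k) ^ 2 / K i i := by
        rw [div_le_iff₀ (by linarith)]
        have h2 : (∑ k, K i k) ^ 2 / K i i * K i i = (∑ k, K i k) ^ 2 := by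
          field_simp
        nlinarith [mul_nonneg hc (sq_nonneg (K i i - ∑ k, K i k)), h2]
      linarith
    · have hrj : (∑ k, K' j k) = ∑ k, K j k := by rw [hrow j, if_neg hij, add_zero]
      have hdj : K' j j = K j j := by rw [hdiag' j, if_neg hij, add_zero]
      rw [hrj, hdj, if_neg hij]
      set d := (∑ k, K j k) ^ 2 / K j j with hd
      have hdnn : 0 ≤ d := div_nonneg (sq_nonneg _) (hdiag j).le
      have h1 : 0 < 1 + S - d := by have := hA j; rw [← hd] at this; linarith
      have h2 : 0 < 1 + (S + c) - d := by linarith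
      have hmul : (1 + (S + c)) * (1 + S - d) ≤ (1 + S) * (1 + (S + c) - d) := by
        nlinarith [mul_nonneg hc hdnn]
      have hlog1 : Real.log ((1 + (S + c)) * (1 + S - d))
          ≤ Real.log ((1 + S) * (1 + (S + c) - d)) :=
        Real.log_le_log (by positivity) hmul
      rw [Real.log_mul (by positivity) (by positivity),
        Real.log_mul (by positivity) (by positivity)] at hlog1
      linarith [hlog1, hL]
  -- sum of ifs
  have hitesum : (∑ j : Fin J, (if i = j then (0:ℝ) else L)) = ((J : ℝ) - 1) * L := by
    have h1 : ∀ j : Fin J, (if i = j then (0:ℝ) else L) = L - (if i = j then L else 0) := by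
      intro j; split <;> ring
    simp only [h1, Finset.sum_sub_distrib, Finset.sum_const, Finset.card_univ,
      Fintype.card_fin, Finset.sum_ite_eq, Finset.mem_univ, if_true, nsmul_eq_mul]
    ring
  have hsumineq : (∑ j : Fin J, Real.log (1 + S - (∑ k, K j k) ^ 2 / K j j))
      + ((J : ℝ) - 1) * L
      ≤ ∑ j : Fin J, Real.log (1 + (S + c) - (∑ k, K' j k) ^ 2 / K' j j) := by
    rw [← hitesum, ← Finset.sum_add_distrib]
    exact Finset.sum_le_sum fun j _ => hkey j
  -- put together
  have hJ1 : (0:ℝ) < (J : ℝ) - 1 := by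
    have : (2:ℝ) ≤ (J:ℝ) := by exact_mod_cast hJ
    linarith
  have hcoef : 0 ≤ lam / (2 * ((J : ℝ) - 1)) := by positivity
  rw [hFun, hFun, hsum', ← hS]
  set coef := lam / (2 * ((J : ℝ) - 1)) with hcoef_def
  set SA := ∑ j : Fin J, Real.log (1 + S - (∑ k, K j k) ^ 2 / K j j) with hSA
  set SA' := ∑ j : Fin J, Real.log (1 + (S + c) - (∑ k, K' j k) ^ 2 / K' j j) with hSA'
  have h1 : coef * (SA + ((J:ℝ) - 1) * L) ≤ coef * SA' :=
    mul_le_mul_of_nonneg_left hsumineq hcoef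
  have h2 : coef * (((J:ℝ) - 1) * L) = lam / 2 * L := by
    rw [hcoef_def]; field_simp
  have h3 : ((lam - 1) / 2) * L ≤ (lam / 2) * L :=
    mul_le_mul_of_nonneg_right (by linarith) hLnn
  have h4 : Real.log (1 + (S + c)) = Real.log (1 + S) + L := by rw [hL]; ring
  rw [h4]
  clear_value S L coef SA SA'
  linarith [h1, h2, h3, hLnn]

/-- Let `J ≥ 2`, `λ ≥ 0`, `K` a `J×J` real positive semidefinite matrix with strictly
positive diagonal entries, `P₁ ≥ K₁₁`, and `K′ = K + (P₁ − K₁₁)·e₁e₁ᵀ`. Then `K′` is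
positive semidefinite and `h(λ, K′) ≤ h(λ, K)`. -/
theorem stmt_8 (J : ℕ) (hJ : 2 ≤ J) (lam : ℝ) (hlam : 0 ≤ lam)
    (K : Matrix (Fin J) (Fin J) ℝ) (hpsd : K.PosSemidef)
    (hdiag : ∀ j : Fin J, 0 < K j j)
    (P₁ : ℝ) (hP₁ : K ⟨0, by omega⟩ ⟨0, by omega⟩ ≤ P₁) :
    (K + Matrix.single (⟨0, by omega⟩ : Fin J) (⟨0, by omega⟩ : Fin J)
        (P₁ - K ⟨0, by omega⟩ ⟨0, by omega⟩)).PosSemidef ∧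
      hFun J lam (K + Matrix.single (⟨0, by omega⟩ : Fin J) (⟨0, by omega⟩ : Fin J)
          (P₁ - K ⟨0, by omega⟩ ⟨0, by omega⟩))
        ≤ hFun J lam K := by
  exact aux_main J hJ lam hlam K hpsd hdiag ⟨0, by omega⟩
    (P₁ - K ⟨0, by omega⟩ ⟨0, by omega⟩) (by linarith)
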